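/- Let κ > 0, set α(t) = ∫₀^{κ√t} e^{-r²/2} dr and η(t) = ∫₀^∞ e^{-r²/(2t)} r sinh(κr) log(sinh(κr)/(κr)) dr for t > 0. Then for every t > 0: η(t) < κ²t² + κ t^{3/2}(κ²t + 1) e^{κ²t/2} α(t) - √(π/2)·κ t^{3/2} e^{κ²t/2}·log(1 + √(π/2)·κ²t·α(t)^{-1}). -/

import Mathlib

open Real MeasureTheory

/-- `α(t) = ∫₀^{κ√t} e^{-r²/2} dr`. -/
noncomputable def alphaFun (κ t : ℝ) : ℝ :=
  ∫ r in (0 : ℝ)..(κ * Real.sqrt t), Real.exp (-r ^ 2 / 2)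

/-- `η(t) = ∫₀^∞ e^{-r²/(2t)} r sinh(κr) log(sinh(κr)/(κr)) dr`. -/
noncomputable def etaFun (κ t : ℝ) : ℝ :=
  ∫ r in Set.Ioi (0 : ℝ),
    Real.exp (-r ^ 2 / (2 * t)) * r * Real.sinh (κ * r) *
      Real.log (Real.sinh (κ * r) / (κ * r))


open Filter Set

/-- Auxiliary: incomplete Gaussian integral. -/
noncomputable def Phi (x : ℝ) : ℝ := ∫ v in (0:ℝ)..x, Real.exp (-v ^ 2 / 2)

lemma contGauss : Continuous fun v : ℝ => Real.exp (-v ^ 2 / 2) := by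
  fun_prop

lemma Phi_hasDeriv (x : ℝ) : HasDerivAt Phi (Real.exp (-x ^ 2 / 2)) x := by
  refine intervalIntegral.integral_hasDerivAt_right
    (contGauss.intervalIntegrable _ _)
    (contGauss.stronglyMeasurableAtFilter _ _) contGauss.continuousAt

lemma Phi_neg (x : ℝ) : Phi (-x) = - Phi x := by
  have h1 : Phi (-x) = ∫ v in (0:ℝ)..(-x), Real.exp (-(-v) ^ 2 / 2) := by
    rw [Phi]; simp [neg_sq]
  rw [h1, intervalIntegral.integral_comp_neg (fun v => Real.exp (-v ^ 2 / 2))]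
  rw [show -(-x) = x by ring, show -(0:ℝ) = 0 by ring,
    intervalIntegral.integral_symm]
  rfl

lemma gauss_integrableOn_Ioi : IntegrableOn (fun v : ℝ => Real.exp (-v ^ 2 / 2)) (Ioi 0) := by
  have h := integrable_exp_neg_mul_sq (b := (1:ℝ)/2) (by norm_num)
  have : (fun v : ℝ => Real.exp (-v ^ 2 / 2)) = fun v : ℝ => Real.exp (-(1/2) * v ^ 2) := by
    ext v; ring_nf
  rw [this]
  exact h.integrableOn

lemma gauss_Ioi_val : ∫ v in Ioi (0:ℝ), Real.exp (-v ^ 2 / 2) = Real.sqrt (π / 2) := by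
  have h := integral_gaussian_Ioi (1/2)
  have e : (fun v : ℝ => Real.exp (-v ^ 2 / 2)) = fun v : ℝ => Real.exp (-(1/2) * v ^ 2) := by
    ext v; ring_nf
  rw [e, h]
  rw [show π / ((1:ℝ)/2) = 4 * (π/2) by ring, show (4:ℝ) * (π/2) = 2^2 * (π/2) by norm_num,
    Real.sqrt_mul (by positivity), Real.sqrt_sq (by norm_num)]
  ring

lemma Phi_tendsto : Tendsto Phi atTop (nhds (Real.sqrt (π / 2))) := by
  rw [← gauss_Ioi_val]
  exact intervalIntegral_tendsto_integral_Ioi 0 gauss_integrableOn_Ioi tendsto_id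

lemma Phi_pos {x : ℝ} (hx : 0 < x) : 0 < Phi x := by
  refine intervalIntegral.intervalIntegral_pos_of_pos_on
    (contGauss.intervalIntegrable _ _) (fun v _ => Real.exp_pos _) hx

/-- The key pointwise inequality: `(1+x) sinh x < x e^x` for `x > 0`. -/
lemma sinh_key {x : ℝ} (hx : 0 < x) : (1 + x) * Real.sinh x < x * Real.exp x := by
  -- h y = (1+y) e^{-y} - (1-y) e^y is 0 at 0 and strictly increasing on [0,∞)
  set h : ℝ → ℝ := fun y => (1 + y) * Real.exp (-y) - (1 - y) * Real.exp y with hh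
  have hderiv : ∀ y : ℝ, HasDerivAt h (y * (Real.exp y - Real.exp (-y))) y := by
    intro y
    have h1 : HasDerivAt (fun y : ℝ => (1 + y) * Real.exp (-y))
        (1 * Real.exp (-y) + (1 + y) * (Real.exp (-y) * (-1))) y := by
      exact ((hasDerivAt_id y).const_add 1).mul (((hasDerivAt_id y).neg).exp)
    have h2 : HasDerivAt (fun y : ℝ => (1 - y) * Real.exp y)
        ((-1) * Real.exp y + (1 - y) * Real.exp y) y := by
      have : HasDerivAt (fun y : ℝ => 1 - y) (-1) y := by
        exact (hasDerivAt_id y).const_sub 1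
      exact this.mul (Real.hasDerivAt_exp y)
    have := h1.sub h2
    refine this.congr_deriv ?_
    ring
  have hmono : StrictMonoOn h (Ici 0) := by
    refine strictMonoOn_of_deriv_pos (convex_Ici 0) ?_ ?_
    · exact fun y _ => ((hderiv y).continuousAt).continuousWithinAt
    · intro y hy
      rw [interior_Ici, mem_Ioi] at hy
      rw [(hderiv y).deriv]
      have : Real.exp (-y) < Real.exp y := by
        apply Real.exp_lt_exp.2; linarith
      nlinarith
  have h0 : h 0 = 0 := by simp [hh]
  have hpos : 0 < h x := by
    have := hmono (self_mem_Ici) (mem_Ici.2 hx.le) hx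
    rwa [h0] at this
  rw [hh] at hpos
  simp only at hpos
  rw [Real.sinh_eq]
  have hexp := Real.exp_pos x
  have hexp' := Real.exp_pos (-x)
  nlinarith [hpos]

/-- `log(sinh x / x) < x - log(1+x)` for `x > 0`. -/
lemma log_sinh_lt {x : ℝ} (hx : 0 < x) :
    Real.log (Real.sinh x / x) < x - Real.log (1 + x) := by
  have hs : 0 < Real.sinh x := Real.sinh_pos_iff.2 hx
  have h1x : (0:ℝ) < 1 + x := by linarith
  have key : Real.sinh x / x * (1 + x) < Real.exp x := by
    rw [div_mul_eq_mul_div, mul_comm]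
    rw [div_lt_iff₀ hx]
    calc (1 + x) * Real.sinh x < x * Real.exp x := sinh_key hx
    _ = Real.exp x * x := by ring
  have hlog := Real.log_lt_log (by positivity) key
  rw [Real.log_mul (by positivity) (by positivity), Real.log_exp] at hlog
  linarith

/-- `log(sinh x / x)` is nonneg and at most `x`, for `x > 0`. -/
lemma log_sinh_bounds {x : ℝ} (hx : 0 < x) :
    0 ≤ Real.log (Real.sinh x / x) ∧ Real.log (Real.sinh x / x) ≤ x := by
  constructor
  · apply Real.log_nonneg
    rw [le_div_iff₀ hx]
    simpa using (Real.self_le_sinh_iff.2 hx.le)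
  · have := log_sinh_lt hx
    have h2 : 0 ≤ Real.log (1 + x) := Real.log_nonneg (by linarith)
    linarith

/-- tangent-line bound: `log(1+κρ) + (κρ/(1+κρ))(1 - ρ/r) ≤ log(1+κr)`. -/
lemma tangent_log {κ ρ r : ℝ} (hκ : 0 < κ) (hρ : 0 < ρ) (hr : 0 < r) :
    Real.log (1 + κ*ρ) + (κ*ρ/(1+κ*ρ)) * (1 - ρ/r) ≤ Real.log (1 + κ*r) := by
  have h1 : (0:ℝ) < 1 + κ*ρ := by positivity
  have h2 : (0:ℝ) < 1 + κ*r := by positivity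
  have hlog : Real.log ((1+κ*ρ)/(1+κ*r)) ≤ (1+κ*ρ)/(1+κ*r) - 1 :=
    Real.log_le_sub_one_of_pos (by positivity)
  rw [Real.log_div (by positivity) (by positivity)] at hlog
  have halg : (κ*ρ/(1+κ*ρ)) * (1 - ρ/r) ≤ 1 - (1+κ*ρ)/(1+κ*r) := by
    have key : 1 - (1+κ*ρ)/(1+κ*r) - (κ*ρ/(1+κ*ρ)) * (1 - ρ/r) =
        κ * (r - ρ)^2 / ((1+κ*r)*(1+κ*ρ)*r) := by
      field_simp
      ring
    have hpos : 0 ≤ κ * (r - ρ)^2 / ((1+κ*r)*(1+κ*ρ)*r) := by positivity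
    linarith
  linarith

lemma hasDerivAt_E (t c : ℝ) (ht : 0 < t) (r : ℝ) :
    HasDerivAt (fun r : ℝ => Real.exp (-(r-c)^2/(2*t))) (-((r-c)/t) * Real.exp (-(r-c)^2/(2*t))) r := by
  have h0 : HasDerivAt (fun r : ℝ => r - c) 1 r := (hasDerivAt_id r).sub_const c
  have h1 : HasDerivAt (fun r : ℝ => -(r-c)^2/(2*t)) (-((r-c)/t)) r := by
    have := ((h0.pow 2).neg).div_const (2*t)
    refine this.congr_deriv ?_
    field_simp
    ring
  have := h1.exp
  refine this.congr_deriv ?_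
  ring

lemma hasDerivAt_A (t c : ℝ) (ht : 0 < t) (r : ℝ) :
    HasDerivAt (fun r : ℝ => Real.sqrt t * Phi ((r - c)/Real.sqrt t))
      (Real.exp (-(r-c)^2/(2*t))) r := by
  have hst : (0:ℝ) < Real.sqrt t := Real.sqrt_pos.2 ht
  have h0 : HasDerivAt (fun r : ℝ => (r - c)/Real.sqrt t) (1/Real.sqrt t) r := by
    simpa using ((hasDerivAt_id r).sub_const c).div_const (Real.sqrt t)
  have h1 := (Phi_hasDeriv ((r - c)/Real.sqrt t)).comp r h0
  have h2 := h1.const_mul (Real.sqrt t)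
  refine h2.congr_deriv ?_
  rw [div_pow, Real.sq_sqrt ht.le]
  rw [show -((r-c)^2/t)/2 = -(r-c)^2/(2*t) by ring]
  field_simp

lemma tendsto_E (t c : ℝ) (ht : 0 < t) :
    Tendsto (fun r : ℝ => Real.exp (-(r-c)^2/(2*t))) atTop (nhds 0) := by
  apply Real.tendsto_exp_atBot.comp
  have h1 : Tendsto (fun r : ℝ => r - c) atTop atTop :=
    tendsto_atTop_add_const_right _ (-c) tendsto_id
  have h2 : Tendsto (fun r : ℝ => (r - c)^2) atTop atTop :=
    (tendsto_pow_atTop two_ne_zero).comp h1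
  have h3 : Tendsto (fun r : ℝ => (r - c)^2/(2*t)) atTop atTop :=
    h2.atTop_div_const (by positivity)
  have h4 := tendsto_neg_atBot_iff.2 h3
  refine h4.congr fun r => by ring

lemma tendsto_rE (t c : ℝ) (ht : 0 < t) :
    Tendsto (fun r : ℝ => (r - c) * Real.exp (-(r-c)^2/(2*t))) atTop (nhds 0) := by
  have h1 : Tendsto (fun r : ℝ => r - c) atTop atTop :=
    tendsto_atTop_add_const_right _ (-c) tendsto_id
  have hup : Tendsto (fun r : ℝ => (r - c) * Real.exp (-(r - c))) atTop (nhds 0) := by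
    have := tendsto_pow_mul_exp_neg_atTop_nhds_zero 1
    simp only [pow_one] at this
    exact this.comp h1
  refine tendsto_of_tendsto_of_tendsto_of_le_of_le' tendsto_const_nhds hup ?_ ?_
  · filter_upwards [h1.eventually_ge_atTop 0] with r hr
    positivity
  · filter_upwards [h1.eventually_ge_atTop (2*t)] with r hr
    have hr0 : 0 ≤ r - c := le_trans (by positivity) hr
    have : (r-c)^2/(2*t) ≥ (r - c) := by
      rw [ge_iff_le, le_div_iff₀ (by positivity)]
      nlinarith
    have hexp : Real.exp (-(r-c)^2/(2*t)) ≤ Real.exp (-(r-c)) := by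
      apply Real.exp_le_exp.2
      rw [neg_div]
      linarith
    exact mul_le_mul_of_nonneg_left hexp hr0

lemma tendsto_Phi_comp (t c : ℝ) (ht : 0 < t) :
    Tendsto (fun r : ℝ => Phi ((r - c)/Real.sqrt t)) atTop (nhds (Real.sqrt (π/2))) := by
  apply Phi_tendsto.comp
  exact (tendsto_atTop_add_const_right _ (-c) tendsto_id).atTop_div_const (Real.sqrt_pos.2 ht)

lemma sinh_shift (κ t r : ℝ) (ht : 0 < t) :
    Real.sinh (κ*r) * Real.exp (-r^2/(2*t)) =
      Real.exp (κ^2*t/2)/2 * (Real.exp (-(r - κ*t)^2/(2*t)) - Real.exp (-(r + κ*t)^2/(2*t))) := by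
  have h1 : Real.exp (κ^2*t/2) * Real.exp (-(r - κ*t)^2/(2*t))
      = Real.exp (κ*r) * Real.exp (-r^2/(2*t)) := by
    rw [← Real.exp_add, ← Real.exp_add]; congr 1; field_simp; ring
  have h2 : Real.exp (κ^2*t/2) * Real.exp (-(r + κ*t)^2/(2*t))
      = Real.exp (-(κ*r)) * Real.exp (-r^2/(2*t)) := by
    rw [← Real.exp_add, ← Real.exp_add]; congr 1; field_simp; ring
  rw [Real.sinh_eq]
  linear_combination (h2 - h1) / 2

/-- Master integrability lemma. -/
lemma integrableOn_of_gauss_bound {κ t : ℝ} (ht : 0 < t) {f : ℝ → ℝ} {C : ℝ} (hC : 0 ≤ C)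
    (hm : AEStronglyMeasurable f (volume.restrict (Ioi 0)))
    (hb : ∀ r ∈ Ioi (0:ℝ), |f r| ≤ C * ((1 + r^2) * Real.exp (κ*r) * Real.exp (-r^2/(2*t)))) :
    IntegrableOn f (Ioi 0) := by
  set D := C * ((1+8*t) * Real.exp (2*κ^2*t)) with hD
  have hD0 : 0 ≤ D := by positivity
  have hg : Integrable (fun r : ℝ => D * Real.exp (-(1/(4*t)) * r^2)) :=
    (integrable_exp_neg_mul_sq (by positivity)).const_mul D
  refine Integrable.mono hg.integrableOn hm ?_
  refine (ae_restrict_iff' measurableSet_Ioi).2 (Filter.Eventually.of_forall fun r hr => ?_)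
  have h1 : (1:ℝ) + r^2 ≤ (1+8*t) * Real.exp (r^2/(8*t)) := by
    have he := Real.add_one_le_exp (r^2/(8*t))
    have h8 : (0:ℝ) < 8*t := by positivity
    have hr2 : r^2/(8*t) * (8*t) = r^2 := by field_simp
    have hmul := mul_le_mul_of_nonneg_left he (by positivity : (0:ℝ) ≤ 1+8*t)
    nlinarith [hmul, div_nonneg (sq_nonneg r) h8.le]
  have h2 : Real.exp (κ*r) ≤ Real.exp (2*κ^2*t) * Real.exp (r^2/(8*t)) := by
    rw [← Real.exp_add]
    apply Real.exp_le_exp.2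
    have key : 2*κ^2*t + r^2/(8*t) - κ*r = (4*κ*t - r)^2/(8*t) := by field_simp; ring
    nlinarith [div_nonneg (sq_nonneg (4*κ*t - r)) (by positivity : (0:ℝ) ≤ 8*t)]
  have h3 : Real.exp (r^2/(8*t)) * (Real.exp (r^2/(8*t)) * Real.exp (-r^2/(2*t)))
      = Real.exp (-(1/(4*t)) * r^2) := by
    rw [← Real.exp_add, ← Real.exp_add]
    congr 1
    field_simp
    ring
  have hnorm : ‖f r‖ = |f r| := rfl
  rw [hnorm, Real.norm_eq_abs]
  rw [abs_of_nonneg (by positivity : (0:ℝ) ≤ D * Real.exp (-(1/(4*t)) * r^2))]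
  calc |f r| ≤ C * ((1 + r^2) * Real.exp (κ*r) * Real.exp (-r^2/(2*t))) := hb r hr
    _ ≤ C * (((1+8*t) * Real.exp (r^2/(8*t))) * (Real.exp (2*κ^2*t) * Real.exp (r^2/(8*t)))
          * Real.exp (-r^2/(2*t))) := by
        apply mul_le_mul_of_nonneg_left _ hC
        apply mul_le_mul_of_nonneg_right _ (Real.exp_pos _).le
        apply mul_le_mul h1 h2 (Real.exp_pos _).le (by positivity)
    _ = D * Real.exp (-(1/(4*t)) * r^2) := by
        rw [hD, ← h3]; ring

/-- `∫₀^∞ sinh(κr) e^{-r²/(2t)} = √t e^{κ²t/2} Φ(κ√t)`. -/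
lemma W_eq (κ t : ℝ) (hκ : 0 < κ) (ht : 0 < t) :
    ∫ r in Ioi (0:ℝ), Real.sinh (κ*r) * Real.exp (-r^2/(2*t))
      = Real.sqrt t * Real.exp (κ^2*t/2) * Phi (κ * Real.sqrt t) := by
  have hst : (0:ℝ) < Real.sqrt t := Real.sqrt_pos.2 ht
  set c := κ*t with hc
  set G : ℝ → ℝ := fun r => Real.exp (κ^2*t/2)/2 *
    (Real.sqrt t * Phi ((r - c)/Real.sqrt t) - Real.sqrt t * Phi ((r + c)/Real.sqrt t)) with hGdef
  have hG : ∀ r, HasDerivAt G (Real.sinh (κ*r) * Real.exp (-r^2/(2*t))) r := by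
    intro r
    have hA1 := hasDerivAt_A t c ht r
    have hA2 : HasDerivAt (fun r : ℝ => Real.sqrt t * Phi ((r + c)/Real.sqrt t))
        (Real.exp (-(r + c)^2/(2*t))) r := by
      have := hasDerivAt_A t (-c) ht r
      simpa [sub_neg_eq_add] using this
    have h := (hA1.sub hA2).const_mul (Real.exp (κ^2*t/2)/2)
    rw [sinh_shift κ t r ht, ← hc]
    exact h
  have hint : IntegrableOn (fun r : ℝ => Real.sinh (κ*r) * Real.exp (-r^2/(2*t))) (Ioi 0) := by
    refine integrableOn_of_gauss_bound (κ := κ) ht (zero_le_one) ?_ ?_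
    · exact (Continuous.aestronglyMeasurable (by fun_prop))
    · intro r hr
      rw [mem_Ioi] at hr
      have hs : 0 < Real.sinh (κ*r) := Real.sinh_pos_iff.2 (by positivity)
      rw [abs_of_nonneg (by positivity)]
      have hsinh : Real.sinh (κ*r) ≤ Real.exp (κ*r) := by
        rw [Real.sinh_eq]
        nlinarith [Real.exp_pos (-(κ*r)), Real.exp_pos (κ*r)]
      calc Real.sinh (κ*r) * Real.exp (-r^2/(2*t)) ≤ Real.exp (κ*r) * Real.exp (-r^2/(2*t)) :=
            mul_le_mul_of_nonneg_right hsinh (Real.exp_pos _).le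
        _ ≤ 1 * ((1 + r^2) * Real.exp (κ*r) * Real.exp (-r^2/(2*t))) := by
            nlinarith [Real.exp_pos (κ*r), Real.exp_pos (-r^2/(2*t)), sq_nonneg r,
              mul_pos (Real.exp_pos (κ*r)) (Real.exp_pos (-r^2/(2*t)))]
  have htend : Tendsto G atTop (nhds 0) := by
    have l1 := (tendsto_Phi_comp t c ht).const_mul (Real.sqrt t)
    have l2 : Tendsto (fun r : ℝ => Real.sqrt t * Phi ((r + c)/Real.sqrt t)) atTop
        (nhds (Real.sqrt t * Real.sqrt (π/2))) := by
      have := (tendsto_Phi_comp t (-c) ht).const_mul (Real.sqrt t)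
      simpa [sub_neg_eq_add] using this
    have := (l1.sub l2).const_mul (Real.exp (κ^2*t/2)/2)
    simpa using this
  have key := integral_Ioi_of_hasDerivAt_of_tendsto
    ((hG 0).continuousAt.continuousWithinAt) (fun x _ => hG x) hint htend
  rw [key, hGdef]
  have hts : Real.sqrt t ^ 2 = t := Real.sq_sqrt ht.le
  have h0c : ((0:ℝ) - c)/Real.sqrt t = -(κ * Real.sqrt t) := by
    rw [hc, div_eq_iff (ne_of_gt hst)]
    linear_combination κ * hts
  have h0c' : ((0:ℝ) + c)/Real.sqrt t = κ * Real.sqrt t := by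
    rw [hc, div_eq_iff (ne_of_gt hst)]
    linear_combination (-κ) * hts
  simp only [h0c, h0c', Phi_neg]
  ring

lemma sinh_le_exp' {x : ℝ} (hx : 0 ≤ x) : Real.sinh x ≤ Real.exp x := by
  rw [Real.sinh_eq]
  nlinarith [Real.exp_pos (-x), Real.exp_pos x]

lemma Z_eq (κ t : ℝ) (hκ : 0 < κ) (ht : 0 < t) :
    ∫ r in Ioi (0:ℝ), r * Real.sinh (κ*r) * Real.exp (-r^2/(2*t))
      = Real.sqrt (π/2) * κ * t * Real.sqrt t * Real.exp (κ^2*t/2) := by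
  have hst : (0:ℝ) < Real.sqrt t := Real.sqrt_pos.2 ht
  have hts : Real.sqrt t ^ 2 = t := Real.sq_sqrt ht.le
  set c := κ*t with hc
  set G : ℝ → ℝ := fun r => Real.exp (κ^2*t/2)/2 *
    ((-t * Real.exp (-(r-c)^2/(2*t)) + c * (Real.sqrt t * Phi ((r - c)/Real.sqrt t)))
      - (-t * Real.exp (-(r+c)^2/(2*t)) - c * (Real.sqrt t * Phi ((r + c)/Real.sqrt t)))) with hGdef
  have hE2 : ∀ r : ℝ, HasDerivAt (fun r : ℝ => Real.exp (-(r+c)^2/(2*t)))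
      (-((r+c)/t) * Real.exp (-(r+c)^2/(2*t))) r := fun r => by
    simpa [sub_neg_eq_add] using hasDerivAt_E t (-c) ht r
  have hA2 : ∀ r : ℝ, HasDerivAt (fun r : ℝ => Real.sqrt t * Phi ((r + c)/Real.sqrt t))
      (Real.exp (-(r+c)^2/(2*t))) r := fun r => by
    simpa [sub_neg_eq_add] using hasDerivAt_A t (-c) ht r
  have hG : ∀ r, HasDerivAt G (r * Real.sinh (κ*r) * Real.exp (-r^2/(2*t))) r := by
    intro r
    have h := ((((hasDerivAt_E t c ht r).const_mul (-t)).add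
        ((hasDerivAt_A t c ht r).const_mul c)).sub
      (((hE2 r).const_mul (-t)).sub ((hA2 r).const_mul c))).const_mul
        (Real.exp (κ^2*t/2)/2)
    have hs := sinh_shift κ t r ht
    rw [← hc] at hs
    have heq : Real.exp (κ^2*t/2)/2 *
        ((-t * (-((r-c)/t) * Real.exp (-(r-c)^2/(2*t))) + c * Real.exp (-(r-c)^2/(2*t)))
          - (-t * (-((r+c)/t) * Real.exp (-(r+c)^2/(2*t))) - c * Real.exp (-(r+c)^2/(2*t))))
        = r * Real.sinh (κ*r) * Real.exp (-r^2/(2*t)) := by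
      rw [show r * Real.sinh (κ*r) * Real.exp (-r^2/(2*t))
        = r * (Real.sinh (κ*r) * Real.exp (-r^2/(2*t))) by ring, hs]
      field_simp
      ring
    rw [← heq]
    exact h
  have hint : IntegrableOn (fun r : ℝ => r * Real.sinh (κ*r) * Real.exp (-r^2/(2*t))) (Ioi 0) := by
    refine integrableOn_of_gauss_bound (κ := κ) ht (zero_le_one) ?_ ?_
    · exact (Continuous.aestronglyMeasurable (by fun_prop))
    · intro r hr
      rw [mem_Ioi] at hr
      have hs : 0 < Real.sinh (κ*r) := Real.sinh_pos_iff.2 (by positivity)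
      rw [abs_of_nonneg (by positivity)]
      have hsinh : Real.sinh (κ*r) ≤ Real.exp (κ*r) := sinh_le_exp' (by positivity)
      have h1 : r * Real.sinh (κ*r) * Real.exp (-r^2/(2*t))
          ≤ r * Real.exp (κ*r) * Real.exp (-r^2/(2*t)) := by
        have := mul_le_mul_of_nonneg_left hsinh hr.le
        exact mul_le_mul_of_nonneg_right this (Real.exp_pos _).le
      have h2 : r * Real.exp (κ*r) * Real.exp (-r^2/(2*t))
          ≤ 1 * ((1 + r^2) * Real.exp (κ*r) * Real.exp (-r^2/(2*t))) := by
        have hr1 : r ≤ 1 + r^2 := by nlinarith [sq_nonneg (r-1)]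
        have := mul_le_mul_of_nonneg_right hr1 (Real.exp_pos (κ*r)).le
        have := mul_le_mul_of_nonneg_right this (Real.exp_pos (-r^2/(2*t))).le
        linarith
      linarith
  have htend : Tendsto G atTop
      (nhds (Real.exp (κ^2*t/2)/2 * ((-t * 0 + c * (Real.sqrt t * Real.sqrt (π/2)))
        - (-t * 0 - c * (Real.sqrt t * Real.sqrt (π/2)))))) := by
    have l1 := ((tendsto_E t c ht).const_mul (-t)).add
      (((tendsto_Phi_comp t c ht).const_mul (Real.sqrt t)).const_mul c)
    have lE2 : Tendsto (fun r : ℝ => Real.exp (-(r+c)^2/(2*t))) atTop (nhds 0) := by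
      simpa [sub_neg_eq_add] using tendsto_E t (-c) ht
    have lA2 : Tendsto (fun r : ℝ => Phi ((r + c)/Real.sqrt t)) atTop
        (nhds (Real.sqrt (π/2))) := by
      simpa [sub_neg_eq_add] using tendsto_Phi_comp t (-c) ht
    have l2 := (lE2.const_mul (-t)).sub ((lA2.const_mul (Real.sqrt t)).const_mul c)
    exact (l1.sub l2).const_mul _
  have key := integral_Ioi_of_hasDerivAt_of_tendsto
    ((hG 0).continuousAt.continuousWithinAt) (fun x _ => hG x) hint htend
  rw [key, hGdef]
  have h0c : ((0:ℝ) - c)/Real.sqrt t = -(κ * Real.sqrt t) := by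
    rw [hc, div_eq_iff (ne_of_gt hst)]
    linear_combination κ * hts
  have h0c' : ((0:ℝ) + c)/Real.sqrt t = κ * Real.sqrt t := by
    rw [hc, div_eq_iff (ne_of_gt hst)]
    linear_combination (-κ) * hts
  simp only [h0c, h0c', Phi_neg]
  simp only [hc]
  ring_nf

lemma I_eq (κ t : ℝ) (hκ : 0 < κ) (ht : 0 < t) :
    ∫ r in Ioi (0:ℝ), r^2 * Real.sinh (κ*r) * Real.exp (-r^2/(2*t))
      = κ*t^2 + (t + κ^2*t^2) * Real.sqrt t * Real.exp (κ^2*t/2) * Phi (κ * Real.sqrt t) := by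
  have hst : (0:ℝ) < Real.sqrt t := Real.sqrt_pos.2 ht
  have hts : Real.sqrt t ^ 2 = t := Real.sq_sqrt ht.le
  set c := κ*t with hc
  set G : ℝ → ℝ := fun r => Real.exp (κ^2*t/2)/2 *
    ((-t * ((r - c) * Real.exp (-(r-c)^2/(2*t))) - 2*c*t * Real.exp (-(r-c)^2/(2*t))
        + (t + c^2) * (Real.sqrt t * Phi ((r - c)/Real.sqrt t)))
      - (-t * ((r + c) * Real.exp (-(r+c)^2/(2*t))) + 2*c*t * Real.exp (-(r+c)^2/(2*t))
        + (t + c^2) * (Real.sqrt t * Phi ((r + c)/Real.sqrt t)))) with hGdef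
  have hE2 : ∀ r : ℝ, HasDerivAt (fun r : ℝ => Real.exp (-(r+c)^2/(2*t)))
      (-((r+c)/t) * Real.exp (-(r+c)^2/(2*t))) r := fun r => by
    simpa [sub_neg_eq_add] using hasDerivAt_E t (-c) ht r
  have hA2 : ∀ r : ℝ, HasDerivAt (fun r : ℝ => Real.sqrt t * Phi ((r + c)/Real.sqrt t))
      (Real.exp (-(r+c)^2/(2*t))) r := fun r => by
    simpa [sub_neg_eq_add] using hasDerivAt_A t (-c) ht r
  have hR1 : ∀ r : ℝ, HasDerivAt (fun r : ℝ => (r - c) * Real.exp (-(r-c)^2/(2*t)))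
      (1 * Real.exp (-(r-c)^2/(2*t)) + (r - c) * (-((r-c)/t) * Real.exp (-(r-c)^2/(2*t)))) r :=
    fun r => ((hasDerivAt_id r).sub_const c).mul (hasDerivAt_E t c ht r)
  have hR2 : ∀ r : ℝ, HasDerivAt (fun r : ℝ => (r + c) * Real.exp (-(r+c)^2/(2*t)))
      (1 * Real.exp (-(r+c)^2/(2*t)) + (r + c) * (-((r+c)/t) * Real.exp (-(r+c)^2/(2*t)))) r :=
    fun r => ((hasDerivAt_id r).add_const c).mul (hE2 r)
  have hG : ∀ r, HasDerivAt G (r^2 * Real.sinh (κ*r) * Real.exp (-r^2/(2*t))) r := by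
    intro r
    have h := (((((hR1 r).const_mul (-t)).sub ((hasDerivAt_E t c ht r).const_mul (2*c*t))).add
        ((hasDerivAt_A t c ht r).const_mul (t + c^2))).sub
      ((((hR2 r).const_mul (-t)).add ((hE2 r).const_mul (2*c*t))).add
        ((hA2 r).const_mul (t + c^2)))).const_mul (Real.exp (κ^2*t/2)/2)
    have hs := sinh_shift κ t r ht
    rw [← hc] at hs
    have heq : Real.exp (κ^2*t/2)/2 *
        ((-t * (1 * Real.exp (-(r-c)^2/(2*t)) + (r - c) * (-((r-c)/t) * Real.exp (-(r-c)^2/(2*t))))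
            - 2*c*t * (-((r-c)/t) * Real.exp (-(r-c)^2/(2*t)))
            + (t + c^2) * Real.exp (-(r-c)^2/(2*t)))
          - (-t * (1 * Real.exp (-(r+c)^2/(2*t)) + (r + c) * (-((r+c)/t) * Real.exp (-(r+c)^2/(2*t))))
            + 2*c*t * (-((r+c)/t) * Real.exp (-(r+c)^2/(2*t)))
            + (t + c^2) * Real.exp (-(r+c)^2/(2*t))))
        = r^2 * Real.sinh (κ*r) * Real.exp (-r^2/(2*t)) := by
      rw [show r^2 * Real.sinh (κ*r) * Real.exp (-r^2/(2*t))
        = r^2 * (Real.sinh (κ*r) * Real.exp (-r^2/(2*t))) by ring, hs]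
      field_simp
      ring
    rw [← heq]
    exact h
  have hint : IntegrableOn (fun r : ℝ => r^2 * Real.sinh (κ*r) * Real.exp (-r^2/(2*t))) (Ioi 0) := by
    refine integrableOn_of_gauss_bound (κ := κ) ht (zero_le_one) ?_ ?_
    · exact (Continuous.aestronglyMeasurable (by fun_prop))
    · intro r hr
      rw [mem_Ioi] at hr
      have hs : 0 < Real.sinh (κ*r) := Real.sinh_pos_iff.2 (by positivity)
      rw [abs_of_nonneg (by positivity)]
      have hsinh : Real.sinh (κ*r) ≤ Real.exp (κ*r) := sinh_le_exp' (by positivity)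
      have h1 : r^2 * Real.sinh (κ*r) * Real.exp (-r^2/(2*t))
          ≤ r^2 * Real.exp (κ*r) * Real.exp (-r^2/(2*t)) := by
        have := mul_le_mul_of_nonneg_left hsinh (sq_nonneg r)
        exact mul_le_mul_of_nonneg_right this (Real.exp_pos _).le
      have h2 : r^2 * Real.exp (κ*r) * Real.exp (-r^2/(2*t))
          ≤ 1 * ((1 + r^2) * Real.exp (κ*r) * Real.exp (-r^2/(2*t))) := by
        have hr1 : r^2 ≤ 1 + r^2 := by nlinarith
        have := mul_le_mul_of_nonneg_right hr1 (Real.exp_pos (κ*r)).le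
        have := mul_le_mul_of_nonneg_right this (Real.exp_pos (-r^2/(2*t))).le
        linarith
      linarith
  have lE2 : Tendsto (fun r : ℝ => Real.exp (-(r+c)^2/(2*t))) atTop (nhds 0) := by
    simpa [sub_neg_eq_add] using tendsto_E t (-c) ht
  have lA2 : Tendsto (fun r : ℝ => Phi ((r + c)/Real.sqrt t)) atTop
      (nhds (Real.sqrt (π/2))) := by
    simpa [sub_neg_eq_add] using tendsto_Phi_comp t (-c) ht
  have lR2 : Tendsto (fun r : ℝ => (r + c) * Real.exp (-(r+c)^2/(2*t))) atTop (nhds 0) := by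
    simpa [sub_neg_eq_add] using tendsto_rE t (-c) ht
  have htend : Tendsto G atTop
      (nhds (Real.exp (κ^2*t/2)/2 *
        ((-t * 0 - 2*c*t * 0 + (t + c^2) * (Real.sqrt t * Real.sqrt (π/2)))
          - (-t * 0 + 2*c*t * 0 + (t + c^2) * (Real.sqrt t * Real.sqrt (π/2)))))) := by
    have l1 := (((tendsto_rE t c ht).const_mul (-t)).sub
        ((tendsto_E t c ht).const_mul (2*c*t))).add
      (((tendsto_Phi_comp t c ht).const_mul (Real.sqrt t)).const_mul (t + c^2))
    have l2 := ((lR2.const_mul (-t)).add (lE2.const_mul (2*c*t))).add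
      ((lA2.const_mul (Real.sqrt t)).const_mul (t + c^2))
    exact (l1.sub l2).const_mul _
  have key := integral_Ioi_of_hasDerivAt_of_tendsto
    ((hG 0).continuousAt.continuousWithinAt) (fun x _ => hG x) hint htend
  rw [key, hGdef]
  have h0c : ((0:ℝ) - c)/Real.sqrt t = -(κ * Real.sqrt t) := by
    rw [hc, div_eq_iff (ne_of_gt hst)]
    linear_combination κ * hts
  have h0c' : ((0:ℝ) + c)/Real.sqrt t = κ * Real.sqrt t := by
    rw [hc, div_eq_iff (ne_of_gt hst)]
    linear_combination (-κ) * hts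
  have hKE : Real.exp (κ^2*t/2) * Real.exp (-(0-c)^2/(2*t)) = 1 := by
    rw [← Real.exp_add, hc]
    rw [show κ^2*t/2 + -(0-κ*t)^2/(2*t) = 0 by field_simp; ring]
    exact Real.exp_zero
  have hKE' : Real.exp (κ^2*t/2) * Real.exp (-(0+c)^2/(2*t)) = 1 := by
    rw [← Real.exp_add, hc]
    rw [show κ^2*t/2 + -(0+κ*t)^2/(2*t) = 0 by field_simp; ring]
    exact Real.exp_zero
  simp only [h0c, h0c', Phi_neg]
  rw [hc] at hKE hKE' ⊢
  linear_combination (κ*t^2/2) * hKE + (κ*t^2/2) * hKE'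



/-- For `κ > 0` and `t > 0`,
`η(t) < κ²t² + κ t^{3/2}(κ²t+1)e^{κ²t/2} α(t)
       - √(π/2) κ t^{3/2} e^{κ²t/2} log(1 + √(π/2) κ²t α(t)⁻¹)`. -/
theorem eta_upper_bound (κ : ℝ) (hκ : 0 < κ) (t : ℝ) (ht : 0 < t) :
    etaFun κ t <
      κ ^ 2 * t ^ 2 + κ * t ^ ((3 : ℝ) / 2) * (κ ^ 2 * t + 1) * Real.exp (κ ^ 2 * t / 2) *
          alphaFun κ t -
        Real.sqrt (π / 2) * κ * t ^ ((3 : ℝ) / 2) * Real.exp (κ ^ 2 * t / 2) *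
          Real.log (1 + Real.sqrt (π / 2) * κ ^ 2 * t * (alphaFun κ t)⁻¹) := by
  have hst : (0:ℝ) < Real.sqrt t := Real.sqrt_pos.2 ht
  have hαP : alphaFun κ t = Phi (κ * Real.sqrt t) := rfl
  have hα : 0 < alphaFun κ t := by rw [hαP]; exact Phi_pos (by positivity)
  have hsπ : (0:ℝ) < Real.sqrt (π/2) := Real.sqrt_pos.2 (by positivity)
  set α := alphaFun κ t with hαdef
  set K := Real.exp (κ^2*t/2) with hKdef
  have hK : 0 < K := Real.exp_pos _
  set ρ := Real.sqrt (π/2) * κ * t / α with hρdef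
  have hρ : 0 < ρ := by positivity
  set f₁ : ℝ → ℝ := fun r => Real.exp (-r ^ 2 / (2 * t)) * r * Real.sinh (κ * r) *
      Real.log (Real.sinh (κ * r) / (κ * r)) with hf₁def
  set f₂ : ℝ → ℝ := fun r => Real.exp (-r ^ 2 / (2 * t)) * r * Real.sinh (κ * r) *
      (κ * r - Real.log (1 + κ * r)) with hf₂def
  set fL : ℝ → ℝ := fun r => Real.exp (-r ^ 2 / (2 * t)) * r * Real.sinh (κ * r) *
      Real.log (1 + κ * r) with hfLdef
  -- basic bound helper
  have bound_helper : ∀ (g : ℝ → ℝ), (∀ r, 0 < r → 0 ≤ g r ∧ g r ≤ κ * r) →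
      ∀ r ∈ Ioi (0:ℝ), |Real.exp (-r ^ 2 / (2 * t)) * r * Real.sinh (κ * r) * g r|
        ≤ κ * ((1 + r^2) * Real.exp (κ*r) * Real.exp (-r^2/(2*t))) := by
    intro g hg r hr
    rw [mem_Ioi] at hr
    obtain ⟨hg0, hg1⟩ := hg r hr
    have hs : 0 < Real.sinh (κ*r) := Real.sinh_pos_iff.2 (by positivity)
    have hsinh : Real.sinh (κ*r) ≤ Real.exp (κ*r) := sinh_le_exp' (by positivity)
    rw [abs_of_nonneg (by positivity)]
    have step1 : Real.exp (-r ^ 2 / (2 * t)) * r * Real.sinh (κ * r) * g r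
        ≤ Real.exp (-r ^ 2 / (2 * t)) * r * Real.exp (κ * r) * (κ * r) := by
      apply mul_le_mul _ hg1 hg0 (by positivity)
      apply mul_le_mul_of_nonneg_left hsinh (by positivity)
    have step2 : Real.exp (-r ^ 2 / (2 * t)) * r * Real.exp (κ * r) * (κ * r)
        ≤ κ * ((1 + r^2) * Real.exp (κ*r) * Real.exp (-r^2/(2*t))) := by
      have h1 : κ * (r^2 * (Real.exp (κ*r) * Real.exp (-r^2/(2*t))))
          ≤ κ * ((1 + r^2) * (Real.exp (κ*r) * Real.exp (-r^2/(2*t)))) := by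
        apply mul_le_mul_of_nonneg_left _ hκ.le
        apply mul_le_mul_of_nonneg_right (by nlinarith) (by positivity)
      calc Real.exp (-r ^ 2 / (2 * t)) * r * Real.exp (κ * r) * (κ * r)
          = κ * (r^2 * (Real.exp (κ*r) * Real.exp (-r^2/(2*t)))) := by ring
        _ ≤ κ * ((1 + r^2) * (Real.exp (κ*r) * Real.exp (-r^2/(2*t)))) := h1
        _ = κ * ((1 + r^2) * Real.exp (κ*r) * Real.exp (-r^2/(2*t))) := by ring
    linarith
  -- integrabilities
  have hcont_base : Continuous fun r : ℝ => Real.exp (-r ^ 2 / (2 * t)) * r * Real.sinh (κ * r) := by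
    fun_prop
  have hf₁i : IntegrableOn f₁ (Ioi 0) := by
    refine integrableOn_of_gauss_bound (κ := κ) ht hκ.le ?_ ?_
    · refine ContinuousOn.aestronglyMeasurable ?_ measurableSet_Ioi
      refine hcont_base.continuousOn.mul (ContinuousOn.log ?_ ?_)
      · exact ContinuousOn.div (Real.continuous_sinh.comp (by fun_prop)).continuousOn
          (by fun_prop) (fun r hr => by
            rw [mem_Ioi] at hr; positivity)
      · intro r hr
        rw [mem_Ioi] at hr
        have hs : 0 < Real.sinh (κ*r) := Real.sinh_pos_iff.2 (by positivity)
        positivity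
    · refine bound_helper _ (fun r hr => ?_)
      have := log_sinh_bounds (x := κ*r) (by positivity)
      exact this
  have hlogcont : ContinuousOn (fun r : ℝ => Real.log (1 + κ * r)) (Ioi 0) := by
    refine ContinuousOn.log (by fun_prop) ?_
    intro r hr
    rw [mem_Ioi] at hr
    positivity
  have hf₂i : IntegrableOn f₂ (Ioi 0) := by
    refine integrableOn_of_gauss_bound (κ := κ) ht hκ.le ?_ ?_
    · refine ContinuousOn.aestronglyMeasurable ?_ measurableSet_Ioi
      exact hcont_base.continuousOn.mul
        ((continuous_const.mul continuous_id).continuousOn.sub hlogcont)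
    · refine bound_helper _ (fun r hr => ?_)
      have h1 : Real.log (1 + κ*r) ≤ κ*r := by
        have := Real.log_le_sub_one_of_pos (x := 1 + κ*r) (by positivity)
        linarith
      have h2 : 0 ≤ Real.log (1 + κ*r) := Real.log_nonneg (by nlinarith)
      constructor <;> linarith
  have hfLi : IntegrableOn fL (Ioi 0) := by
    refine integrableOn_of_gauss_bound (κ := κ) ht hκ.le ?_ ?_
    · exact ContinuousOn.aestronglyMeasurable
        (hcont_base.continuousOn.mul hlogcont) measurableSet_Ioi
    · refine bound_helper _ (fun r hr => ?_)
      have h1 : Real.log (1 + κ*r) ≤ κ*r := by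
        have := Real.log_le_sub_one_of_pos (x := 1 + κ*r) (by positivity)
        linarith
      have h2 : 0 ≤ Real.log (1 + κ*r) := Real.log_nonneg (by nlinarith)
      exact ⟨h2, h1⟩
  have hfZi : IntegrableOn (fun r : ℝ => r * Real.sinh (κ*r) * Real.exp (-r^2/(2*t))) (Ioi 0) := by
    refine integrableOn_of_gauss_bound (κ := κ) ht zero_le_one
      (Continuous.aestronglyMeasurable (by fun_prop)) ?_
    intro r hr
    rw [mem_Ioi] at hr
    have hs : 0 < Real.sinh (κ*r) := Real.sinh_pos_iff.2 (by positivity)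
    have hsinh : Real.sinh (κ*r) ≤ Real.exp (κ*r) := sinh_le_exp' (by positivity)
    rw [abs_of_nonneg (by positivity)]
    have h1 : r * Real.sinh (κ*r) * Real.exp (-r^2/(2*t))
        ≤ r * Real.exp (κ*r) * Real.exp (-r^2/(2*t)) :=
      mul_le_mul_of_nonneg_right (mul_le_mul_of_nonneg_left hsinh hr.le) (Real.exp_pos _).le
    have h2 : r * Real.exp (κ*r) * Real.exp (-r^2/(2*t))
        ≤ 1 * ((1 + r^2) * Real.exp (κ*r) * Real.exp (-r^2/(2*t))) := by
      have hr1 : r ≤ 1 + r^2 := by nlinarith [sq_nonneg (r-1)]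
      have h3 := mul_le_mul_of_nonneg_right
        (mul_le_mul_of_nonneg_right hr1 (Real.exp_pos (κ*r)).le) (Real.exp_pos (-r^2/(2*t))).le
      linarith
    linarith
  have hfWi : IntegrableOn (fun r : ℝ => Real.sinh (κ*r) * Real.exp (-r^2/(2*t))) (Ioi 0) := by
    refine integrableOn_of_gauss_bound (κ := κ) ht zero_le_one
      (Continuous.aestronglyMeasurable (by fun_prop)) ?_
    intro r hr
    rw [mem_Ioi] at hr
    have hs : 0 < Real.sinh (κ*r) := Real.sinh_pos_iff.2 (by positivity)
    have hsinh : Real.sinh (κ*r) ≤ Real.exp (κ*r) := sinh_le_exp' (by positivity)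
    rw [abs_of_nonneg (by positivity)]
    have h1 : Real.sinh (κ*r) * Real.exp (-r^2/(2*t)) ≤ Real.exp (κ*r) * Real.exp (-r^2/(2*t)) :=
      mul_le_mul_of_nonneg_right hsinh (Real.exp_pos _).le
    nlinarith [mul_pos (Real.exp_pos (κ*r)) (Real.exp_pos (-r^2/(2*t))), sq_nonneg r]
  have hfIi : IntegrableOn (fun r : ℝ => r^2 * Real.sinh (κ*r) * Real.exp (-r^2/(2*t))) (Ioi 0) := by
    refine integrableOn_of_gauss_bound (κ := κ) ht zero_le_one
      (Continuous.aestronglyMeasurable (by fun_prop)) ?_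
    intro r hr
    rw [mem_Ioi] at hr
    have hs : 0 < Real.sinh (κ*r) := Real.sinh_pos_iff.2 (by positivity)
    have hsinh : Real.sinh (κ*r) ≤ Real.exp (κ*r) := sinh_le_exp' (by positivity)
    rw [abs_of_nonneg (by positivity)]
    have h1 : r^2 * Real.sinh (κ*r) * Real.exp (-r^2/(2*t))
        ≤ r^2 * Real.exp (κ*r) * Real.exp (-r^2/(2*t)) :=
      mul_le_mul_of_nonneg_right (mul_le_mul_of_nonneg_left hsinh (sq_nonneg r)) (Real.exp_pos _).le
    nlinarith [mul_pos (Real.exp_pos (κ*r)) (Real.exp_pos (-r^2/(2*t)))]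
  -- strict inequality between f₁ and f₂ integrals
  have hlt : ∀ r ∈ Ioi (0:ℝ), f₁ r < f₂ r := by
    intro r hr
    rw [mem_Ioi] at hr
    have hs : 0 < Real.sinh (κ*r) := Real.sinh_pos_iff.2 (by positivity)
    have hw : 0 < Real.exp (-r ^ 2 / (2 * t)) * r * Real.sinh (κ * r) := by positivity
    exact mul_lt_mul_of_pos_left (log_sinh_lt (by positivity)) hw
  have hstrict : ∫ r in Ioi (0:ℝ), f₁ r < ∫ r in Ioi (0:ℝ), f₂ r := by
    have hpos : 0 < ∫ r in Ioi (0:ℝ), (f₂ r - f₁ r) := by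
      rw [setIntegral_pos_iff_support_of_nonneg_ae]
      · refine lt_of_lt_of_le ?_ (measure_mono (subset_inter
          (fun r hr => ne_of_gt (sub_pos.2 (hlt r hr))) subset_rfl))
        rw [Real.volume_Ioi]
        exact ENNReal.zero_lt_top
      · exact (ae_restrict_iff' measurableSet_Ioi).2
          (Filter.Eventually.of_forall fun r hr => sub_nonneg.2 (hlt r hr).le)
      · exact hf₂i.sub hf₁i
    have hsub := integral_sub hf₂i hf₁i
    rw [hsub] at hpos
    linarith
  -- tangent bound for the log integral
  have hZval := Z_eq κ t hκ ht
  have hWval := W_eq κ t hκ ht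
  have hIval := I_eq κ t hκ ht
  rw [← hαP] at hWval hIval
  set Zval := Real.sqrt (π/2) * κ * t * Real.sqrt t * K with hZvaldef
  have hZW : ρ * (Real.sqrt t * K * α) = Zval := by
    rw [hρdef, hZvaldef]
    field_simp
  have hLge : Zval * Real.log (1 + κ*ρ) ≤ ∫ r in Ioi (0:ℝ), fL r := by
    set c₁ := Real.log (1 + κ*ρ) with hc₁
    set c₂ := κ*ρ/(1+κ*ρ) with hc₂
    set ℓ : ℝ → ℝ := fun r => (c₁ + c₂) * (r * Real.sinh (κ*r) * Real.exp (-r^2/(2*t)))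
      - (c₂ * ρ) * (Real.sinh (κ*r) * Real.exp (-r^2/(2*t))) with hℓdef
    have hℓi : IntegrableOn ℓ (Ioi 0) :=
      ((hfZi.const_mul (c₁ + c₂)).sub (hfWi.const_mul (c₂ * ρ)))
    have hmono : ∫ r in Ioi (0:ℝ), ℓ r ≤ ∫ r in Ioi (0:ℝ), fL r := by
      refine setIntegral_mono_on hℓi hfLi measurableSet_Ioi ?_
      intro r hr
      rw [mem_Ioi] at hr
      have hs : 0 < Real.sinh (κ*r) := Real.sinh_pos_iff.2 (by positivity)
      have hw : (0:ℝ) ≤ r * Real.sinh (κ*r) * Real.exp (-r^2/(2*t)) := by positivity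
      have htan := tangent_log (ρ := ρ) hκ hρ hr
      have h2 := mul_le_mul_of_nonneg_left htan hw
      have hexpand : r * Real.sinh (κ*r) * Real.exp (-r^2/(2*t)) * (c₁ + c₂ * (1 - ρ/r)) = ℓ r := by
        rw [hℓdef]
        field_simp
        ring
      have hright : r * Real.sinh (κ*r) * Real.exp (-r^2/(2*t)) * Real.log (1 + κ*r) = fL r := by
        rw [hfLdef]; ring
      rw [mul_comm] at h2
      rw [← hexpand, ← hright]
      calc r * Real.sinh (κ*r) * Real.exp (-r^2/(2*t)) * (c₁ + c₂ * (1 - ρ/r))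
          = (c₁ + c₂ * (1 - ρ/r)) * (r * Real.sinh (κ*r) * Real.exp (-r^2/(2*t))) := by ring
        _ ≤ Real.log (1 + κ*r) * (r * Real.sinh (κ*r) * Real.exp (-r^2/(2*t))) := by
            apply mul_le_mul_of_nonneg_right htan hw
        _ = r * Real.sinh (κ*r) * Real.exp (-r^2/(2*t)) * Real.log (1 + κ*r) := by ring
    have hℓval : ∫ r in Ioi (0:ℝ), ℓ r = (c₁ + c₂) * Zval - (c₂ * ρ) * (Real.sqrt t * K * α) := by
      rw [hℓdef]
      rw [integral_sub (hfZi.const_mul (c₁ + c₂)) (hfWi.const_mul (c₂ * ρ))]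
      rw [integral_const_mul, integral_const_mul, hZval, hWval]
    have hle : Zval * c₁ ≤ ∫ r in Ioi (0:ℝ), ℓ r := by
      rw [hℓval]
      have : (c₁ + c₂) * Zval - (c₂ * ρ) * (Real.sqrt t * K * α)
          = Zval * c₁ + c₂ * (Zval - ρ * (Real.sqrt t * K * α)) := by ring
      rw [this, hZW]
      simp
    linarith
  -- split f₂
  have hsplit : ∫ r in Ioi (0:ℝ), f₂ r
      = κ * (∫ r in Ioi (0:ℝ), r^2 * Real.sinh (κ*r) * Real.exp (-r^2/(2*t)))
        - ∫ r in Ioi (0:ℝ), fL r := by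
    have heq : EqOn f₂ (fun r => κ * (r^2 * Real.sinh (κ*r) * Real.exp (-r^2/(2*t))) - fL r)
        (Ioi 0) := by
      intro r hr
      rw [hf₂def, hfLdef]
      ring
    rw [setIntegral_congr_fun measurableSet_Ioi heq]
    rw [integral_sub (hfIi.const_mul κ) hfLi, integral_const_mul]
  -- final assembly
  have h32 : t ^ ((3:ℝ)/2) = t * Real.sqrt t := by
    rw [show (3:ℝ)/2 = 1 + 1/2 by norm_num, Real.rpow_add ht, Real.rpow_one,
      ← Real.sqrt_eq_rpow]
  have hκρ : κ*ρ = Real.sqrt (π/2) * κ^2 * t * α⁻¹ := by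
    rw [hρdef]
    field_simp
  have hη : etaFun κ t = ∫ r in Ioi (0:ℝ), f₁ r := rfl
  rw [hη]
  calc ∫ r in Ioi (0:ℝ), f₁ r < ∫ r in Ioi (0:ℝ), f₂ r := hstrict
    _ = κ * (∫ r in Ioi (0:ℝ), r^2 * Real.sinh (κ*r) * Real.exp (-r^2/(2*t)))
        - ∫ r in Ioi (0:ℝ), fL r := hsplit
    _ ≤ κ * (κ*t^2 + (t + κ^2*t^2) * Real.sqrt t * K * α) - Zval * Real.log (1 + κ*ρ) := by
        rw [hIval]
        linarith
    _ = κ ^ 2 * t ^ 2 + κ * t ^ ((3 : ℝ) / 2) * (κ ^ 2 * t + 1) * K * α -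
        Real.sqrt (π / 2) * κ * t ^ ((3 : ℝ) / 2) * K *
          Real.log (1 + Real.sqrt (π / 2) * κ ^ 2 * t * α⁻¹) := by
        rw [← hκρ, h32, hZvaldef]
        ring
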